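/- Fix homotopy data (α,τ,S), an orientation α_o of α, and a ∈ α_o with a ≠ τ(a); write b = τ(a). For any r-component nanophrase p and components i < j, writing k = ⟨g_{i,j,a}, p⟩ and l = ⟨g_{i,j,b}, p⟩, the identities ⟨e_{i,j,a,a} + f_{i,j,a,a}, p⟩ = k(k−1)/2 and ⟨e_{i,j,b,b} + f_{i,j,b,b}, p⟩ = l(l−1)/2 and ⟨e_{i,j,a,b} + f_{i,j,a,b} + e_{i,j,b,a} + f_{i,j,b,a}, p⟩ = kl hold; consequently the degree-2 angle bracket formula ⟨2e_{i,j,a,a}+2f_{i,j,a,a}−2e_{i,j,a,b}−2f_{i,j,a,b}−2e_{i,j,b,a}−2f_{i,j,b,a}+2e_{i,j,b,b}+2f_{i,j,b,b}+g_{i,j,a}+g_{i,j,b}, p⟩ equals (k − l)², the square of the (a-component of the) linking number. -/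

import Mathlib

open List

attribute [local instance] Classical.propDecidable

/-- A symbol in a nanophrase: either a separator `none` or a letter occurrence
`some (x, a)` where `x` is the letter's name and `a` its label in `α`. -/
abbrev NSym (α : Type) := Option (ℕ × α)

/-- A phrase: list of symbols; `none` separates components. -/
abbrev NPhrase (α : Type) := List (NSym α)

/-- The list of letter occurrences of a phrase. -/
def occs {α : Type} (p : NPhrase α) : List (ℕ × α) := p.filterMap id

/-- The set of (names of) letters appearing in a phrase. -/
def lettersOf {α : Type} (p : NPhrase α) : Finset ℕ := ((occs p).map Prod.fst).toFinset

/-- The rank: number of distinct letters. -/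
def rank {α : Type} (p : NPhrase α) : ℕ := (lettersOf p).card

/-- A nanophrase: each letter appears exactly twice, with a consistent label. -/
def IsNano {α : Type} (p : NPhrase α) : Prop :=
  (∀ x ∈ lettersOf p, ((occs p).map Prod.fst).count x = 2) ∧
  (∀ x a b, (x, a) ∈ occs p → (x, b) ∈ occs p → a = b)

/-- The number of components of a phrase. -/
def comps {α : Type} (p : NPhrase α) : ℕ := p.countP (fun s => s.isNone) + 1

/-- The subphrase with letter set restricted to `T`. -/
def restrict {α : Type} (p : NPhrase α) (T : Finset ℕ) : NPhrase α :=
  p.filter (fun s => match s with | none => true | some (x, _) => decide (x ∈ T))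

/-- Isomorphism of (nano)phrases: a renaming of letters preserving labels. -/
def Iso {α : Type} (p q : NPhrase α) : Prop :=
  ∃ σ : ℕ ≃ ℕ, p.map (Option.map (fun xa => (σ xa.1, xa.2))) = q

/-- Angle bracket: the number of subphrases of `p` isomorphic to `q`. -/
noncomputable def bracketN {α : Type} (q p : NPhrase α) : ℕ :=
  ((lettersOf p).powerset.filter (fun T => Iso (restrict p T) q)).card

/-- Homotopy moves for homotopy data `(α, τ, S)`. -/
inductive HMove {α : Type} (τ : α → α) (S : Set (α × α × α)) : NPhrase α → NPhrase α → Prop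
  | h1 (x y : NPhrase α) (i : ℕ) (a : α) :
      HMove τ S (x ++ [some (i,a), some (i,a)] ++ y) (x ++ y)
  | h2 (x y z : NPhrase α) (i j : ℕ) (a b : α) (h : a = τ b) :
      HMove τ S (x ++ [some (i,a), some (j,b)] ++ y ++ [some (j,b), some (i,a)] ++ z)
        (x ++ y ++ z)
  | h3 (x y z t : NPhrase α) (i j k : ℕ) (a b c : α) (h : (a,b,c) ∈ S) :
      HMove τ S
        (x ++ [some (i,a), some (j,b)] ++ y ++ [some (i,a), some (k,c)] ++ z
           ++ [some (j,b), some (k,c)] ++ t)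
        (x ++ [some (j,b), some (i,a)] ++ y ++ [some (k,c), some (i,a)] ++ z
           ++ [some (k,c), some (j,b)] ++ t)

/-- Homotopy: equivalence generated by isomorphism and the moves H1, H2, H3. -/
def Homotopic {α : Type} (τ : α → α) (S : Set (α × α × α)) : NPhrase α → NPhrase α → Prop :=
  Relation.EqvGen (fun p q => HMove τ S p q ∨ Iso p q)

/-- Build a phrase from a list of components. -/
def ofComponents {α : Type} (L : List (List (ℕ × α))) : NPhrase α :=
  ((L.map (fun c => c.map some)).intersperse [none]).flatten

/-- `g_{i,j,a}`: a single letter with one occurrence in component `i` and one in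
component `j` (`i < j`), labeled `a`. -/
def gPat {α : Type} (r : ℕ) (i j : Fin r) (a : α) : NPhrase α :=
  ofComponents (List.ofFn fun k : Fin r => if k = i ∨ k = j then [(0,a)] else [])

/-- `e_{i,j,a,b}`: component `i` is `AB` and component `j` is `AB`, `|A|=a`, `|B|=b`. -/
def ePat {α : Type} (r : ℕ) (i j : Fin r) (a b : α) : NPhrase α :=
  ofComponents (List.ofFn fun k : Fin r =>
    if k = i then [(0,a),(1,b)] else if k = j then [(0,a),(1,b)] else [])

/-- `f_{i,j,a,b}`: component `i` is `AB` and component `j` is `BA`, `|A|=a`, `|B|=b`. -/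
def fPat {α : Type} (r : ℕ) (i j : Fin r) (a b : α) : NPhrase α :=
  ofComponents (List.ofFn fun k : Fin r =>
    if k = i then [(0,a),(1,b)] else if k = j then [(1,b),(0,a)] else [])

namespace NanoAux
variable {α : Type}

def decode : NPhrase α → List (List (ℕ × α))
  | [] => [[]]
  | none :: p => [] :: decode p
  | some xa :: p =>
    match decode p with
    | [] => [[xa]]
    | c :: rest => (xa :: c) :: rest

theorem decode_ne_nil (p : NPhrase α) : decode p ≠ [] := by
  match p with
  | [] => simp [decode]
  | none :: p => simp [decode]
  | some xa :: p =>
    simp only [decode]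
    rcases h : decode p with _ | ⟨c, rest⟩ <;> simp

theorem ofComponents_nil : ofComponents ([] : List (List (ℕ × α))) = [] := rfl

theorem ofComponents_single (c : List (ℕ × α)) : ofComponents [c] = c.map some := by
  simp [ofComponents]

theorem ofComponents_cons (c d : List (ℕ × α)) (C : List (List (ℕ × α))) :
    ofComponents (c :: d :: C) = c.map some ++ none :: ofComponents (d :: C) := by
  simp [ofComponents, List.intersperse]

theorem ofComponents_decode : ∀ p : NPhrase α, ofComponents (decode p) = p := by
  intro p
  induction p with
  | nil => simp [decode, ofComponents_single]
  | cons s p ih =>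
    match s with
    | none =>
      rcases h : decode p with _ | ⟨d, C⟩
      · exact absurd h (decode_ne_nil p)
      · rw [h] at ih
        simp [decode, h, ofComponents_cons, ih]
    | some xa =>
      rcases h : decode p with _ | ⟨c, rest⟩
      · exact absurd h (decode_ne_nil p)
      · rw [h] at ih
        simp only [decode, h]
        rcases rest with _ | ⟨d, C⟩
        · simp only [ofComponents_single] at ih ⊢
          simp [ih]
        · rw [ofComponents_cons] at ih ⊢
          simp [ih]

theorem length_decode : ∀ p : NPhrase α, (decode p).length = comps p := by
  intro p
  induction p with
  | nil => simp [decode, comps]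
  | cons s p ih =>
    match s with
    | none => simp [decode, comps, List.countP_cons] at *; omega
    | some xa =>
      rcases h : decode p with _ | ⟨c, rest⟩
      · exact absurd h (decode_ne_nil p)
      · rw [h] at ih
        simp [decode, h, comps, List.countP_cons] at *
        omega

theorem decode_append_map_some (c : List (ℕ × α)) (q : NPhrase α) :
    ∀ h t, decode q = h :: t → decode (c.map some ++ q) = (c ++ h) :: t := by
  induction c with
  | nil => intro h t hq; simpa using hq
  | cons xa c ih =>
    intro h t hq
    simp only [List.map_cons, List.cons_append, decode]
    rw [ih h t hq]

theorem decode_ofComponents : ∀ C : List (List (ℕ × α)), C ≠ [] → decode (ofComponents C) = C := by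
  intro C
  induction C with
  | nil => intro h; exact absurd rfl h
  | cons c C ih =>
    intro _
    rcases C with _ | ⟨d, C'⟩
    · rw [ofComponents_single]
      have : decode (c.map some ++ ([] : NPhrase α)) = (c ++ []) :: [] :=
        decode_append_map_some c [] [] [] rfl
      simpa using this
    · rw [ofComponents_cons]
      have hd : decode (none :: ofComponents (d :: C') : NPhrase α) = [] :: (d :: C') := by
        simp [decode, ih (by simp)]
      have := decode_append_map_some c (none :: ofComponents (d :: C')) [] (d :: C') hd
      simpa using this

theorem ofComponents_inj {C C' : List (List (ℕ × α))} (hC : C ≠ []) (hC' : C' ≠ [])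
    (h : ofComponents C = ofComponents C') : C = C' := by
  rw [← decode_ofComponents C hC, ← decode_ofComponents C' hC', h]



theorem filter_map_some (T : Finset ℕ) (c : List (ℕ × α)) :
    (c.map some).filter
      (fun s : NSym α => match s with | none => true | some (x, _) => decide (x ∈ T)) =
    (c.filter (fun xa => decide (xa.1 ∈ T))).map some := by
  rw [List.filter_map]
  congr 1

theorem restrict_ofComponents (T : Finset ℕ) :
    ∀ C : List (List (ℕ × α)),
    restrict (ofComponents C) T = ofComponents (C.map (fun c => c.filter (fun xa => decide (xa.1 ∈ T)))) := by
  intro C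
  induction C with
  | nil => rfl
  | cons c C ih =>
    rcases C with _ | ⟨d, C'⟩
    · simp only [List.map_cons, List.map_nil, ofComponents_single, restrict]
      exact filter_map_some T c
    · simp only [List.map_cons] at ih ⊢
      rw [ofComponents_cons, ofComponents_cons, restrict, List.filter_append]
      rw [restrict] at ih
      simp only [List.filter_cons]
      rw [filter_map_some T c]
      simp only [ih]
      rfl

theorem map_ofComponents (g : ℕ × α → ℕ × α) :
    ∀ C : List (List (ℕ × α)),
    (ofComponents C).map (Option.map g) = ofComponents (C.map (fun c => c.map g)) := by
  intro C
  induction C with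
  | nil => rfl
  | cons c C ih =>
    rcases C with _ | ⟨d, C'⟩
    · simp only [List.map_cons, List.map_nil, ofComponents_single, List.map_map]
      rfl
    · simp only [List.map_cons] at ih ⊢
      rw [ofComponents_cons, ofComponents_cons, List.map_append, List.map_cons, ih,
        List.map_map, List.map_map]
      rfl

theorem occs_ofComponents : ∀ C : List (List (ℕ × α)), occs (ofComponents C) = C.flatten := by
  intro C
  induction C with
  | nil => rfl
  | cons c C ih =>
    rcases C with _ | ⟨d, C'⟩
    · simp only [ofComponents_single, occs, List.flatten]
      simp [List.filterMap_map]
    · rw [ofComponents_cons, occs, List.filterMap_append]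
      simp only [List.filterMap_cons]
      rw [occs] at ih
      simp only [ih, List.filterMap_map]
      simp [List.flatten_cons]

theorem iso_restrict_iff {r : ℕ} (hr : r ≠ 0) (D : Fin r → List (ℕ × α)) (T : Finset ℕ)
    (c : Fin r → List (ℕ × α)) :
    Iso (restrict (ofComponents (List.ofFn D)) T) (ofComponents (List.ofFn c)) ↔
    ∃ σ : ℕ ≃ ℕ, ∀ k : Fin r,
      ((D k).filter (fun xa => decide (xa.1 ∈ T))).map (fun xa => (σ xa.1, xa.2)) = c k := by
  have hnil : (List.ofFn c) ≠ [] := by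
    simp [List.ofFn_eq_nil_iff, hr]
  constructor
  · rintro ⟨σ, hσ⟩
    refine ⟨σ, fun k => ?_⟩
    rw [restrict_ofComponents, map_ofComponents, List.map_map, List.map_ofFn] at hσ
    have := ofComponents_inj (by simp [List.ofFn_eq_nil_iff, hr]) hnil hσ
    have h2 := List.ofFn_injective this
    exact congrFun h2 k
  · rintro ⟨σ, hσ⟩
    refine ⟨σ, ?_⟩
    rw [restrict_ofComponents, map_ofComponents, List.map_map, List.map_ofFn]
    exact congrArg ofComponents (congrArg List.ofFn (funext fun k => hσ k))

theorem mem_lettersOf_ofFn {r : ℕ} (D : Fin r → List (ℕ × α)) (x : ℕ) :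
    x ∈ lettersOf (ofComponents (List.ofFn D)) ↔ ∃ k : Fin r, ∃ lab : α, (x, lab) ∈ D k := by
  rw [lettersOf, occs_ofComponents]
  simp only [List.mem_toFinset, List.mem_map, List.mem_flatten, List.mem_ofFn]
  constructor
  · rintro ⟨⟨y, lab⟩, ⟨⟨l, ⟨k, rfl⟩, hmem⟩, rfl⟩⟩
    exact ⟨k, lab, hmem⟩
  · rintro ⟨k, lab, h⟩
    exact ⟨(x, lab), ⟨D k, ⟨k, rfl⟩, h⟩, rfl⟩


/-! ### small list lemmas -/

theorem filter_filter_of_imp {β : Type} (c : List β) (p q : β → Bool)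
    (h : ∀ e, q e = true → p e = true) :
    (c.filter p).filter q = c.filter q := by
  rw [List.filter_filter]
  apply List.filter_congr
  intro e _
  by_cases hq : q e = true
  · simp [hq, h e hq]
  · simp at hq; simp [hq]

theorem filter_or_of_left_nil {β : Type} {c : List β} {p q : β → Bool}
    (h : c.filter p = []) : c.filter (fun e => p e || q e) = c.filter q := by
  induction c with
  | nil => rfl
  | cons e c ih =>
    simp only [List.filter_cons] at h ⊢
    cases hp : p e with
    | true => simp [hp] at h
    | false =>
      simp only [hp] at h ⊢
      simp only [Bool.false_or]
      cases hq : q e <;> simp [hq, ih h]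

theorem filter_or_comm {β : Type} (c : List β) (p q : β → Bool) :
    c.filter (fun e => p e || q e) = c.filter (fun e => q e || p e) := by
  apply List.filter_congr
  intro e _
  exact Bool.or_comm _ _

theorem filter_pair_or {β : Type} {c : List β} {p q : β → Bool} {ea eb : β}
    (hdisj : ∀ e, ¬(p e = true ∧ q e = true))
    (hx : c.filter p = [ea]) (hy : c.filter q = [eb]) :
    c.filter (fun e => p e || q e) = [ea, eb] ∨
    c.filter (fun e => p e || q e) = [eb, ea] := by
  induction c with
  | nil => simp at hx
  | cons e c ih =>
    cases hp : p e with
    | true =>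
      have hq : q e = false := by
        cases hq : q e
        · rfl
        · exact absurd ⟨hp, hq⟩ (hdisj e)
      rw [List.filter_cons, if_pos (by simp [hp])] at hx
      rw [List.filter_cons, if_neg (by simp [hq])] at hy
      rw [List.filter_cons, if_pos (by simp [hp])]
      simp only [List.cons.injEq] at hx
      obtain ⟨rfl, hpc⟩ := hx
      left
      rw [filter_or_of_left_nil hpc, hy]
    | false =>
      cases hq : q e with
      | true =>
        rw [List.filter_cons, if_neg (by simp [hp])] at hx
        rw [List.filter_cons, if_pos (by simp [hq])] at hy
        rw [List.filter_cons, if_pos (by simp [hq])]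
        simp only [List.cons.injEq] at hy
        obtain ⟨rfl, hqc⟩ := hy
        right
        rw [filter_or_comm, filter_or_of_left_nil hqc, hx]
      | false =>
        rw [List.filter_cons, if_neg (by simp [hp])] at hx
        rw [List.filter_cons, if_neg (by simp [hq])] at hy
        rw [List.filter_cons, if_neg (by simp [hp, hq])]
        exact ih hx hy

theorem map_eq_pair {β γ : Type} {l : List β} {g : β → γ} {e1 e2 : γ}
    (h : l.map g = [e1, e2]) : ∃ a1 a2, l = [a1, a2] ∧ g a1 = e1 ∧ g a2 = e2 := by
  match l, h with
  | [a1, a2], h =>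
    simp only [List.map_cons, List.map_nil, List.cons.injEq, and_true] at h
    exact ⟨a1, a2, rfl, h.1, h.2⟩

theorem map_eq_single {β γ : Type} {l : List β} {g : β → γ} {e1 : γ}
    (h : l.map g = [e1]) : ∃ a1, l = [a1] ∧ g a1 = e1 := by
  match l, h with
  | [a1], h =>
    simp only [List.map_cons, List.map_nil, List.cons.injEq, and_true] at h
    exact ⟨a1, rfl, h⟩

theorem exists_equiv_pair {x y u v : ℕ} (hxy : x ≠ y) (huv : u ≠ v) :
    ∃ σ : ℕ ≃ ℕ, σ x = u ∧ σ y = v := by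
  refine ⟨(Equiv.swap x u).trans (Equiv.swap ((Equiv.swap x u) y) v), ?_, ?_⟩
  · simp only [Equiv.trans_apply, Equiv.swap_apply_left]
    rw [Equiv.swap_apply_of_ne_of_ne]
    · intro h
      apply hxy
      have := congrArg (Equiv.swap x u) h
      rwa [Equiv.swap_apply_right, Equiv.swap_apply_self] at this
    · exact huv
  · simp only [Equiv.trans_apply, Equiv.swap_apply_left]


/-! ### characterizations -/

variable {r : ℕ}

def occL (D : Fin r → List (ℕ × α)) (x : ℕ) (k : Fin r) : List (ℕ × α) :=
  (D k).filter (fun e => decide (e.1 = x))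

def filtT (D : Fin r → List (ℕ × α)) (T : Finset ℕ) (k : Fin r) : List (ℕ × α) :=
  (D k).filter (fun xa => decide (xa.1 ∈ T))

def Pgood (D : Fin r → List (ℕ × α)) (i j : Fin r) (x : ℕ) (lab : α) : Prop :=
  occL D x i = [(x, lab)] ∧ occL D x j = [(x, lab)] ∧
    ∀ k, k ≠ i → k ≠ j → occL D x k = []

theorem iso_restrict_iff' (hr : r ≠ 0) (D : Fin r → List (ℕ × α)) (T : Finset ℕ)
    (c : Fin r → List (ℕ × α)) :
    Iso (restrict (ofComponents (List.ofFn D)) T) (ofComponents (List.ofFn c)) ↔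
    ∃ σ : ℕ ≃ ℕ, ∀ k : Fin r,
      (filtT D T k).map (fun xa => (σ xa.1, xa.2)) = c k :=
  iso_restrict_iff hr D T c

theorem occL_eq_filter_filtT (D : Fin r → List (ℕ × α)) {x : ℕ} {T : Finset ℕ} (k : Fin r)
    (hx : x ∈ T) :
    (filtT D T k).filter (fun e => decide (e.1 = x)) = occL D x k := by
  apply filter_filter_of_imp
  intro e he
  simp only [decide_eq_true_eq] at he ⊢
  rw [he]; exact hx

theorem filtT_eq_nil (D : Fin r → List (ℕ × α)) {T : Finset ℕ} {k : Fin r}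
    (h : ∀ x ∈ T, occL D x k = []) : filtT D T k = [] := by
  rw [filtT, List.filter_eq_nil_iff]
  intro e he hmem
  simp only [decide_eq_true_eq] at hmem
  have h2 : e ∈ occL D e.1 k := List.mem_filter.mpr ⟨he, by simp⟩
  rw [h e.1 hmem] at h2
  exact absurd h2 List.not_mem_nil

theorem filtT_singleton (D : Fin r → List (ℕ × α)) {T : Finset ℕ} {x : ℕ} (k : Fin r)
    (hT : T = {x}) : filtT D T k = occL D x k := by
  subst hT
  apply List.filter_congr
  intro e _
  simp

theorem filtT_pair (D : Fin r → List (ℕ × α)) {T : Finset ℕ} {x y : ℕ} {la lb : α} (k : Fin r)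
    (hxy : x ≠ y) (hT : T = {x, y})
    (hx : occL D x k = [(x, la)]) (hy : occL D y k = [(y, lb)]) :
    filtT D T k = [(x, la), (y, lb)] ∨ filtT D T k = [(y, lb), (x, la)] := by
  have heq : filtT D T k =
      (D k).filter (fun e => decide (e.1 = x) || decide (e.1 = y)) := by
    subst hT
    apply List.filter_congr
    intro e _
    simp [Finset.mem_insert]
  rw [heq]
  exact filter_pair_or (fun e ⟨h1, h2⟩ => by
    simp only [decide_eq_true_eq] at h1 h2; exact hxy (h1.symm.trans h2)) hx hy

theorem mem_of_filtT {D : Fin r → List (ℕ × α)} {T : Finset ℕ} {k : Fin r} {e : ℕ × α}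
    (h : e ∈ filtT D T k) : e.1 ∈ T := by
  have := (List.mem_filter.mp h).2
  simpa using this

theorem mem_filtT_of {D : Fin r → List (ℕ × α)} {T : Finset ℕ} {k : Fin r} {e : ℕ × α}
    (h1 : e ∈ D k) (h2 : e.1 ∈ T) : e ∈ filtT D T k :=
  List.mem_filter.mpr ⟨h1, by simpa using h2⟩

/-- Core: extract `Pgood` and `T = {x,y}` from explicit `filtT` values. -/
theorem pair_core {D : Fin r → List (ℕ × α)} {i j : Fin r} {T : Finset ℕ}
    (hT : T ⊆ lettersOf (ofComponents (List.ofFn D)))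
    {x y : ℕ} {la lb : α} (hxy : x ≠ y)
    (hui : filtT D T i = [(x, la), (y, lb)])
    (huj : filtT D T j = [(x, la), (y, lb)] ∨ filtT D T j = [(y, lb), (x, la)])
    (hemp : ∀ k, k ≠ i → k ≠ j → filtT D T k = []) :
    Pgood D i j x la ∧ Pgood D i j y lb ∧ T = {x, y} := by
  have hyx : y ≠ x := hxy.symm
  have hxT : x ∈ T := mem_of_filtT (e := (x, la)) (by rw [hui]; exact List.mem_cons_self)
  have hyT : y ∈ T := mem_of_filtT (e := (y, lb)) (by rw [hui]; simp)
  have hxi : occL D x i = [(x, la)] := by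
    rw [← occL_eq_filter_filtT D i hxT, hui]; simp [hyx]
  have hyi : occL D y i = [(y, lb)] := by
    rw [← occL_eq_filter_filtT D i hyT, hui]; simp [hxy]
  have hxj : occL D x j = [(x, la)] := by
    rcases huj with h | h <;> rw [← occL_eq_filter_filtT D j hxT, h] <;> simp [hyx]
  have hyj : occL D y j = [(y, lb)] := by
    rcases huj with h | h <;> rw [← occL_eq_filter_filtT D j hyT, h] <;> simp [hxy]
  have hxk : ∀ k, k ≠ i → k ≠ j → occL D x k = [] := by
    intro k hki hkj
    rw [← occL_eq_filter_filtT D k hxT, hemp k hki hkj]; rfl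
  have hyk : ∀ k, k ≠ i → k ≠ j → occL D y k = [] := by
    intro k hki hkj
    rw [← occL_eq_filter_filtT D k hyT, hemp k hki hkj]; rfl
  refine ⟨⟨hxi, hxj, hxk⟩, ⟨hyi, hyj, hyk⟩, ?_⟩
  apply Finset.Subset.antisymm
  · intro z hz
    obtain ⟨k, lab', hmem⟩ := (mem_lettersOf_ofFn D z).mp (hT hz)
    have hm : (z, lab') ∈ filtT D T k := mem_filtT_of hmem hz
    by_cases hki : k = i
    · subst hki
      rw [hui] at hm
      simp only [List.mem_cons, List.mem_singleton, Prod.mk.injEq] at hm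
      rcases hm with ⟨rfl, _⟩ | ⟨⟨rfl, _⟩ | h⟩ <;> simp_all [Finset.mem_insert]
    · by_cases hkj : k = j
      · subst hkj
        rcases huj with h | h <;> rw [h] at hm <;>
          simp only [List.mem_cons, List.mem_singleton, Prod.mk.injEq] at hm <;>
          rcases hm with ⟨rfl, _⟩ | ⟨⟨rfl, _⟩ | h2⟩ <;> simp_all [Finset.mem_insert]
      · rw [hemp k hki hkj] at hm
        exact absurd hm List.not_mem_nil
  · intro z hz
    rcases Finset.mem_insert.mp hz with rfl | hz2
    · exact hxT
    · rw [Finset.mem_singleton] at hz2; subst hz2; exact hyT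


theorem g_char {D : Fin r → List (ℕ × α)} {i j : Fin r} (hr : r ≠ 0) (hij : i ≠ j)
    (lab : α) (T : Finset ℕ) (hT : T ⊆ lettersOf (ofComponents (List.ofFn D))) :
    Iso (restrict (ofComponents (List.ofFn D)) T) (gPat r i j lab) ↔
    ∃ x, T = {x} ∧ Pgood D i j x lab := by
  rw [gPat, iso_restrict_iff' hr]
  constructor
  · rintro ⟨σ, h⟩
    have hi := h i
    have hj := h j
    have hji : j ≠ i := hij.symm
    simp only [true_or, or_true, if_pos] at hi hj
    obtain ⟨⟨x, la'⟩, hui, hg1⟩ := map_eq_single hi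
    simp only [Prod.mk.injEq] at hg1
    obtain ⟨hσx, hla⟩ := hg1
    rw [hla] at hui
    obtain ⟨⟨x', lb'⟩, huj, hg2⟩ := map_eq_single hj
    simp only [Prod.mk.injEq] at hg2
    obtain ⟨hσx', hlb⟩ := hg2
    rw [hlb] at huj
    have hxx : x = x' := σ.injective (hσx.trans hσx'.symm)
    subst hxx
    have hxT : x ∈ T := mem_of_filtT (e := (x, lab)) (by rw [hui]; simp)
    have hxi : occL D x i = [(x, lab)] := by
      rw [← occL_eq_filter_filtT D i hxT, hui]; simp
    have hxj : occL D x j = [(x, lab)] := by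
      rw [← occL_eq_filter_filtT D j hxT, huj]; simp
    have hemp : ∀ k, k ≠ i → k ≠ j → filtT D T k = [] := by
      intro k hki hkj
      have hk := h k
      rw [if_neg (by simp [hki, hkj])] at hk
      exact List.map_eq_nil_iff.mp hk
    refine ⟨x, ?_, hxi, hxj, fun k hki hkj => by
      rw [← occL_eq_filter_filtT D k hxT, hemp k hki hkj]; rfl⟩
    apply Finset.Subset.antisymm
    · intro z hz
      obtain ⟨k, lab', hmem⟩ := (mem_lettersOf_ofFn D z).mp (hT hz)
      have hm : (z, lab') ∈ filtT D T k := mem_filtT_of hmem hz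
      by_cases hki : k = i
      · subst hki
        rw [hui] at hm
        simp only [List.mem_singleton, Prod.mk.injEq] at hm
        simp [hm.1]
      · by_cases hkj : k = j
        · subst hkj
          rw [huj] at hm
          simp only [List.mem_singleton, Prod.mk.injEq] at hm
          simp [hm.1]
        · rw [hemp k hki hkj] at hm
          exact absurd hm List.not_mem_nil
    · simp [hxT]
  · rintro ⟨x, rfl, hx, hxj, hxk⟩
    refine ⟨Equiv.swap x 0, fun k => ?_⟩
    by_cases hki : k = i
    · subst hki
      rw [if_pos (Or.inl rfl), filtT_singleton D k rfl, hx]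
      simp
    · by_cases hkj : k = j
      · subst hkj
        rw [if_pos (Or.inr rfl), filtT_singleton D k rfl, hxj]
        simp
      · rw [if_neg (by simp [hki, hkj]), filtT_singleton D k rfl, hxk k hki hkj]
        rfl

theorem e_char {D : Fin r → List (ℕ × α)} {i j : Fin r} (hr : r ≠ 0) (hij : i ≠ j)
    (la lb : α) (T : Finset ℕ) (hT : T ⊆ lettersOf (ofComponents (List.ofFn D))) :
    Iso (restrict (ofComponents (List.ofFn D)) T) (ePat r i j la lb) ↔
    ∃ x y, x ≠ y ∧ T = {x, y} ∧ Pgood D i j x la ∧ Pgood D i j y lb ∧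
      filtT D T i = [(x, la), (y, lb)] ∧ filtT D T j = [(x, la), (y, lb)] := by
  rw [ePat, iso_restrict_iff' hr]
  constructor
  · rintro ⟨σ, h⟩
    have hi := h i
    have hj := h j
    have hji : j ≠ i := hij.symm
    rw [if_pos rfl] at hi
    rw [if_neg hji, if_pos rfl] at hj
    obtain ⟨⟨x, la'⟩, ⟨y, lb'⟩, hui, hg1, hg2⟩ := map_eq_pair hi
    simp only [Prod.mk.injEq] at hg1 hg2
    obtain ⟨hσx, rfl⟩ := hg1
    obtain ⟨hσy, rfl⟩ := hg2
    obtain ⟨⟨x', la'⟩, ⟨y', lb'⟩, huj, hg3, hg4⟩ := map_eq_pair hj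
    simp only [Prod.mk.injEq] at hg3 hg4
    obtain ⟨hσx', rfl⟩ := hg3
    obtain ⟨hσy', rfl⟩ := hg4
    have hxx : x = x' := σ.injective (hσx.trans hσx'.symm)
    have hyy : y = y' := σ.injective (hσy.trans hσy'.symm)
    subst hxx; subst hyy
    have hxy : x ≠ y := fun hc => by
      rw [hc, hσy] at hσx; exact one_ne_zero hσx
    have hemp : ∀ k, k ≠ i → k ≠ j → filtT D T k = [] := by
      intro k hki hkj
      have hk := h k
      rw [if_neg hki, if_neg hkj] at hk
      exact List.map_eq_nil_iff.mp hk
    obtain ⟨h1, h2, h3⟩ := pair_core hT hxy hui (Or.inl huj) hemp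
    exact ⟨x, y, hxy, h3, h1, h2, hui, huj⟩
  · rintro ⟨x, y, hxy, rfl, hx, hy, hui, huj⟩
    obtain ⟨σ, hσx, hσy⟩ := exists_equiv_pair hxy (by norm_num : (0 : ℕ) ≠ 1)
    refine ⟨σ, fun k => ?_⟩
    by_cases hki : k = i
    · subst hki
      rw [if_pos rfl, hui]
      simp [hσx, hσy]
    · by_cases hkj : k = j
      · subst hkj
        rw [if_neg hki, if_pos rfl, huj]
        simp [hσx, hσy]
      · rw [if_neg hki, if_neg hkj,
          filtT_eq_nil D (fun z hz => ?_)]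
        · rfl
        · rcases Finset.mem_insert.mp hz with rfl | hz2
          · exact hx.2.2 k hki hkj
          · rw [Finset.mem_singleton] at hz2; subst hz2
            exact hy.2.2 k hki hkj

theorem f_char {D : Fin r → List (ℕ × α)} {i j : Fin r} (hr : r ≠ 0) (hij : i ≠ j)
    (la lb : α) (T : Finset ℕ) (hT : T ⊆ lettersOf (ofComponents (List.ofFn D))) :
    Iso (restrict (ofComponents (List.ofFn D)) T) (fPat r i j la lb) ↔
    ∃ x y, x ≠ y ∧ T = {x, y} ∧ Pgood D i j x la ∧ Pgood D i j y lb ∧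
      filtT D T i = [(x, la), (y, lb)] ∧ filtT D T j = [(y, lb), (x, la)] := by
  rw [fPat, iso_restrict_iff' hr]
  constructor
  · rintro ⟨σ, h⟩
    have hi := h i
    have hj := h j
    have hji : j ≠ i := hij.symm
    rw [if_pos rfl] at hi
    rw [if_neg hji, if_pos rfl] at hj
    obtain ⟨⟨x, la'⟩, ⟨y, lb'⟩, hui, hg1, hg2⟩ := map_eq_pair hi
    simp only [Prod.mk.injEq] at hg1 hg2
    obtain ⟨hσx, rfl⟩ := hg1
    obtain ⟨hσy, rfl⟩ := hg2
    obtain ⟨⟨y', lb'⟩, ⟨x', la'⟩, huj, hg3, hg4⟩ := map_eq_pair hj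
    simp only [Prod.mk.injEq] at hg3 hg4
    obtain ⟨hσy', rfl⟩ := hg3
    obtain ⟨hσx', rfl⟩ := hg4
    have hxx : x = x' := σ.injective (hσx.trans hσx'.symm)
    have hyy : y = y' := σ.injective (hσy.trans hσy'.symm)
    subst hxx; subst hyy
    have hxy : x ≠ y := fun hc => by
      rw [hc, hσy] at hσx; exact one_ne_zero hσx
    have hemp : ∀ k, k ≠ i → k ≠ j → filtT D T k = [] := by
      intro k hki hkj
      have hk := h k
      rw [if_neg hki, if_neg hkj] at hk
      exact List.map_eq_nil_iff.mp hk
    obtain ⟨h1, h2, h3⟩ := pair_core hT hxy hui (Or.inr huj) hemp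
    exact ⟨x, y, hxy, h3, h1, h2, hui, huj⟩
  · rintro ⟨x, y, hxy, rfl, hx, hy, hui, huj⟩
    obtain ⟨σ, hσx, hσy⟩ := exists_equiv_pair hxy (by norm_num : (0 : ℕ) ≠ 1)
    refine ⟨σ, fun k => ?_⟩
    by_cases hki : k = i
    · subst hki
      rw [if_pos rfl, hui]
      simp [hσx, hσy]
    · by_cases hkj : k = j
      · subst hkj
        rw [if_neg hki, if_pos rfl, huj]
        simp [hσx, hσy]
      · rw [if_neg hki, if_neg hkj,
          filtT_eq_nil D (fun z hz => ?_)]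
        · rfl
        · rcases Finset.mem_insert.mp hz with rfl | hz2
          · exact hx.2.2 k hki hkj
          · rw [Finset.mem_singleton] at hz2; subst hz2
            exact hy.2.2 k hki hkj


theorem Pgood_label_eq {D : Fin r → List (ℕ × α)} {i j : Fin r} {x : ℕ} {la lb : α}
    (h1 : Pgood D i j x la) (h2 : Pgood D i j x lb) : la = lb := by
  have := h1.1.symm.trans h2.1
  simp only [List.cons.injEq, Prod.mk.injEq] at this
  exact this.1.2

theorem count_g {D : Fin r → List (ℕ × α)} {i j : Fin r} (hr : r ≠ 0) (hij : i ≠ j) (lab : α) :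
    bracketN (gPat r i j lab) (ofComponents (List.ofFn D)) =
    ((lettersOf (ofComponents (List.ofFn D))).filter (fun x => Pgood D i j x lab)).card := by
  rw [bracketN]
  have hset : (lettersOf (ofComponents (List.ofFn D))).powerset.filter
      (fun T => Iso (restrict (ofComponents (List.ofFn D)) T) (gPat r i j lab)) =
      ((lettersOf (ofComponents (List.ofFn D))).filter
        (fun x => Pgood D i j x lab)).image (fun x => {x}) := by
    ext T
    simp only [Finset.mem_filter, Finset.mem_powerset, Finset.mem_image]
    constructor
    · rintro ⟨hsub, hiso⟩
      obtain ⟨x, rfl, hg⟩ := (g_char hr hij lab T hsub).mp hiso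
      exact ⟨x, ⟨hsub (Finset.mem_singleton_self x), hg⟩, rfl⟩
    · rintro ⟨x, ⟨hxl, hg⟩, rfl⟩
      have hsub : ({x} : Finset ℕ) ⊆ lettersOf (ofComponents (List.ofFn D)) :=
        Finset.singleton_subset_iff.mpr hxl
      exact ⟨hsub, (g_char hr hij lab _ hsub).mpr ⟨x, rfl, hg⟩⟩
  rw [hset, Finset.card_image_of_injective _ Finset.singleton_injective]

theorem count_same {D : Fin r → List (ℕ × α)} {i j : Fin r} (hr : r ≠ 0) (hij : i ≠ j)
    (lab : α) :
    bracketN (ePat r i j lab lab) (ofComponents (List.ofFn D)) +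
    bracketN (fPat r i j lab lab) (ofComponents (List.ofFn D)) =
    (((lettersOf (ofComponents (List.ofFn D))).filter
      (fun x => Pgood D i j x lab)).card).choose 2 := by
  rw [bracketN, bracketN]
  set p := ofComponents (List.ofFn D) with hp
  set G := (lettersOf p).filter (fun x => Pgood D i j x lab) with hG
  set A := (lettersOf p).powerset.filter (fun T => Iso (restrict p T) (ePat r i j lab lab))
    with hA
  set B := (lettersOf p).powerset.filter (fun T => Iso (restrict p T) (fPat r i j lab lab))
    with hB
  have hdisj : Disjoint A B := by
    rw [Finset.disjoint_left]
    intro T hTA hTB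
    rw [hA, Finset.mem_filter, Finset.mem_powerset] at hTA
    rw [hB, Finset.mem_filter, Finset.mem_powerset] at hTB
    obtain ⟨hsub, hisoA⟩ := hTA
    obtain ⟨_, hisoB⟩ := hTB
    obtain ⟨x, y, hxy, hTeq, hx, hy, huiA, hujA⟩ :=
      (e_char hr hij lab lab T hsub).mp hisoA
    obtain ⟨x', y', hxy', hTeq', hx', hy', huiB, hujB⟩ :=
      (f_char hr hij lab lab T hsub).mp hisoB
    have h1 := huiA.symm.trans huiB
    simp only [List.cons.injEq, Prod.mk.injEq] at h1
    obtain ⟨⟨hxx, -⟩, ⟨hyy, -⟩, -⟩ := h1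
    rw [← hxx, ← hyy] at hujB
    have h2 := hujA.symm.trans hujB
    simp only [List.cons.injEq, Prod.mk.injEq] at h2
    exact hxy h2.1.1
  have hunion : A ∪ B = Finset.powersetCard 2 G := by
    ext T
    rw [Finset.mem_union, hA, hB, Finset.mem_filter, Finset.mem_filter,
      Finset.mem_powerset, Finset.mem_powersetCard]
    constructor
    · rintro (⟨hsub, hiso⟩ | ⟨hsub, hiso⟩)
      · obtain ⟨x, y, hxy, rfl, hx, hy, -, -⟩ := (e_char hr hij lab lab T hsub).mp hiso
        refine ⟨?_, Finset.card_pair hxy⟩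
        rw [hG]
        intro z hz
        rcases Finset.mem_insert.mp hz with rfl | hz2
        · exact Finset.mem_filter.mpr ⟨hsub (by simp), hx⟩
        · rw [Finset.mem_singleton] at hz2; subst hz2
          exact Finset.mem_filter.mpr ⟨hsub (by simp), hy⟩
      · obtain ⟨x, y, hxy, rfl, hx, hy, -, -⟩ := (f_char hr hij lab lab T hsub).mp hiso
        refine ⟨?_, Finset.card_pair hxy⟩
        rw [hG]
        intro z hz
        rcases Finset.mem_insert.mp hz with rfl | hz2
        · exact Finset.mem_filter.mpr ⟨hsub (by simp), hx⟩
        · rw [Finset.mem_singleton] at hz2; subst hz2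
          exact Finset.mem_filter.mpr ⟨hsub (by simp), hy⟩
    · rintro ⟨hsubG, hcard⟩
      obtain ⟨x, y, hxy, rfl⟩ := Finset.card_eq_two.mp hcard
      have hxG := hsubG (Finset.mem_insert_self x {y})
      have hyG := hsubG (Finset.mem_insert_of_mem (Finset.mem_singleton_self y))
      rw [hG, Finset.mem_filter] at hxG hyG
      obtain ⟨hxl, hx⟩ := hxG
      obtain ⟨hyl, hy⟩ := hyG
      have hsub : ({x, y} : Finset ℕ) ⊆ lettersOf p := by
        intro z hz
        rcases Finset.mem_insert.mp hz with rfl | hz2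
        · exact hxl
        · rw [Finset.mem_singleton] at hz2; subst hz2; exact hyl
      have hui := filtT_pair D i hxy rfl hx.1 hy.1
      have huj := filtT_pair D j hxy rfl hx.2.1 hy.2.1
      rcases hui with hui | hui <;> rcases huj with huj | huj
      · exact Or.inl ⟨hsub, (e_char hr hij lab lab _ hsub).mpr
          ⟨x, y, hxy, rfl, hx, hy, hui, huj⟩⟩
      · exact Or.inr ⟨hsub, (f_char hr hij lab lab _ hsub).mpr
          ⟨x, y, hxy, rfl, hx, hy, hui, huj⟩⟩
      · exact Or.inr ⟨hsub, (f_char hr hij lab lab _ hsub).mpr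
          ⟨y, x, hxy.symm, Finset.pair_comm x y, hy, hx, hui, huj⟩⟩
      · exact Or.inl ⟨hsub, (e_char hr hij lab lab _ hsub).mpr
          ⟨y, x, hxy.symm, Finset.pair_comm x y, hy, hx, hui, huj⟩⟩
  rw [← Finset.card_union_of_disjoint hdisj, hunion, Finset.card_powersetCard]


theorem count_mixed {D : Fin r → List (ℕ × α)} {i j : Fin r} (hr : r ≠ 0) (hij : i ≠ j)
    {la lb : α} (hab : la ≠ lb) :
    bracketN (ePat r i j la lb) (ofComponents (List.ofFn D)) +
    bracketN (fPat r i j la lb) (ofComponents (List.ofFn D)) +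
    bracketN (ePat r i j lb la) (ofComponents (List.ofFn D)) +
    bracketN (fPat r i j lb la) (ofComponents (List.ofFn D)) =
    ((lettersOf (ofComponents (List.ofFn D))).filter (fun x => Pgood D i j x la)).card *
    ((lettersOf (ofComponents (List.ofFn D))).filter (fun x => Pgood D i j x lb)).card := by
  simp only [bracketN]
  set p := ofComponents (List.ofFn D) with hp
  set GA := (lettersOf p).filter (fun x => Pgood D i j x la) with hGA
  set GB := (lettersOf p).filter (fun x => Pgood D i j x lb) with hGB
  set A1 := (lettersOf p).powerset.filter (fun T => Iso (restrict p T) (ePat r i j la lb))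
    with hA1
  set A2 := (lettersOf p).powerset.filter (fun T => Iso (restrict p T) (fPat r i j la lb))
    with hA2
  set A3 := (lettersOf p).powerset.filter (fun T => Iso (restrict p T) (ePat r i j lb la))
    with hA3
  set A4 := (lettersOf p).powerset.filter (fun T => Iso (restrict p T) (fPat r i j lb la))
    with hA4
  have hGdisj : ∀ z, z ∈ GA → z ∈ GB → False := fun z h1 h2 =>
    hab (Pgood_label_eq (Finset.mem_filter.mp h1).2 (Finset.mem_filter.mp h2).2)
  have m1 : ∀ T ∈ A1, (filtT D T i).map Prod.snd = [la, lb] ∧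
      (filtT D T j).map Prod.snd = [la, lb] := by
    intro T hT
    rw [hA1, Finset.mem_filter, Finset.mem_powerset] at hT
    obtain ⟨hsub, hiso⟩ := hT
    obtain ⟨x, y, -, -, -, -, hui, huj⟩ := (e_char hr hij la lb T hsub).mp hiso
    rw [hui, huj]; exact ⟨rfl, rfl⟩
  have m2 : ∀ T ∈ A2, (filtT D T i).map Prod.snd = [la, lb] ∧
      (filtT D T j).map Prod.snd = [lb, la] := by
    intro T hT
    rw [hA2, Finset.mem_filter, Finset.mem_powerset] at hT
    obtain ⟨hsub, hiso⟩ := hT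
    obtain ⟨x, y, -, -, -, -, hui, huj⟩ := (f_char hr hij la lb T hsub).mp hiso
    rw [hui, huj]; exact ⟨rfl, rfl⟩
  have m3 : ∀ T ∈ A3, (filtT D T i).map Prod.snd = [lb, la] ∧
      (filtT D T j).map Prod.snd = [lb, la] := by
    intro T hT
    rw [hA3, Finset.mem_filter, Finset.mem_powerset] at hT
    obtain ⟨hsub, hiso⟩ := hT
    obtain ⟨x, y, -, -, -, -, hui, huj⟩ := (e_char hr hij lb la T hsub).mp hiso
    rw [hui, huj]; exact ⟨rfl, rfl⟩
  have m4 : ∀ T ∈ A4, (filtT D T i).map Prod.snd = [lb, la] ∧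
      (filtT D T j).map Prod.snd = [la, lb] := by
    intro T hT
    rw [hA4, Finset.mem_filter, Finset.mem_powerset] at hT
    obtain ⟨hsub, hiso⟩ := hT
    obtain ⟨x, y, -, -, -, -, hui, huj⟩ := (f_char hr hij lb la T hsub).mp hiso
    rw [hui, huj]; exact ⟨rfl, rfl⟩
  have dsig : ∀ {u : List α}, u = [la, lb] → u = [lb, la] → False := by
    intro u h1 h2
    rw [h1] at h2
    simp only [List.cons.injEq] at h2
    exact hab h2.1
  have d12 : Disjoint A1 A2 := Finset.disjoint_left.mpr fun T h1 h2 =>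
    dsig (m1 T h1).2 (m2 T h2).2
  have d13 : Disjoint A1 A3 := Finset.disjoint_left.mpr fun T h1 h2 =>
    dsig (m1 T h1).1 (m3 T h2).1
  have d14 : Disjoint A1 A4 := Finset.disjoint_left.mpr fun T h1 h2 =>
    dsig (m1 T h1).1 (m4 T h2).1
  have d23 : Disjoint A2 A3 := Finset.disjoint_left.mpr fun T h1 h2 =>
    dsig (m2 T h1).1 (m3 T h2).1
  have d24 : Disjoint A2 A4 := Finset.disjoint_left.mpr fun T h1 h2 =>
    dsig (m2 T h1).1 (m4 T h2).1
  have d34 : Disjoint A3 A4 := Finset.disjoint_left.mpr fun T h1 h2 =>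
    dsig (m4 T h2).2 (m3 T h1).2
  have hunion : A1 ∪ A2 ∪ A3 ∪ A4 = (GA ×ˢ GB).image (fun q => {q.1, q.2}) := by
    ext T
    constructor
    · intro hT
      simp only [Finset.mem_union] at hT
      have main : ∃ x y, x ∈ GA ∧ y ∈ GB ∧ T = {x, y} := by
        rcases hT with ((h1 | h2) | h3) | h4
        · rw [hA1, Finset.mem_filter, Finset.mem_powerset] at h1
          obtain ⟨hsub, hiso⟩ := h1
          obtain ⟨x, y, hxy, rfl, hx, hy, -, -⟩ := (e_char hr hij la lb T hsub).mp hiso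
          exact ⟨x, y, Finset.mem_filter.mpr ⟨hsub (by simp), hx⟩,
            Finset.mem_filter.mpr ⟨hsub (by simp), hy⟩, rfl⟩
        · rw [hA2, Finset.mem_filter, Finset.mem_powerset] at h2
          obtain ⟨hsub, hiso⟩ := h2
          obtain ⟨x, y, hxy, rfl, hx, hy, -, -⟩ := (f_char hr hij la lb T hsub).mp hiso
          exact ⟨x, y, Finset.mem_filter.mpr ⟨hsub (by simp), hx⟩,
            Finset.mem_filter.mpr ⟨hsub (by simp), hy⟩, rfl⟩
        · rw [hA3, Finset.mem_filter, Finset.mem_powerset] at h3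
          obtain ⟨hsub, hiso⟩ := h3
          obtain ⟨x, y, hxy, rfl, hx, hy, -, -⟩ := (e_char hr hij lb la T hsub).mp hiso
          exact ⟨y, x, Finset.mem_filter.mpr ⟨hsub (by simp), hy⟩,
            Finset.mem_filter.mpr ⟨hsub (by simp), hx⟩, Finset.pair_comm x y⟩
        · rw [hA4, Finset.mem_filter, Finset.mem_powerset] at h4
          obtain ⟨hsub, hiso⟩ := h4
          obtain ⟨x, y, hxy, rfl, hx, hy, -, -⟩ := (f_char hr hij lb la T hsub).mp hiso
          exact ⟨y, x, Finset.mem_filter.mpr ⟨hsub (by simp), hy⟩,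
            Finset.mem_filter.mpr ⟨hsub (by simp), hx⟩, Finset.pair_comm x y⟩
      obtain ⟨x, y, hx, hy, rfl⟩ := main
      exact Finset.mem_image.mpr ⟨(x, y), Finset.mem_product.mpr ⟨hx, hy⟩, rfl⟩
    · intro hT
      obtain ⟨⟨x, y⟩, hq, rfl⟩ := Finset.mem_image.mp hT
      obtain ⟨hx, hy⟩ := Finset.mem_product.mp hq
      have hxy : x ≠ y := by
        rintro rfl
        exact hGdisj x hx hy
      rw [hGA, Finset.mem_filter] at hx
      rw [hGB, Finset.mem_filter] at hy
      obtain ⟨hxl, hxg⟩ := hx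
      obtain ⟨hyl, hyg⟩ := hy
      have hsub : ({x, y} : Finset ℕ) ⊆ lettersOf p := by
        intro z hz
        rcases Finset.mem_insert.mp hz with rfl | hz2
        · exact hxl
        · rw [Finset.mem_singleton] at hz2; subst hz2; exact hyl
      have hui := filtT_pair D i hxy rfl hxg.1 hyg.1
      have huj := filtT_pair D j hxy rfl hxg.2.1 hyg.2.1
      simp only [Finset.mem_union]
      rcases hui with hui | hui <;> rcases huj with huj | huj
      · exact Or.inl (Or.inl (Or.inl (Finset.mem_filter.mpr ⟨Finset.mem_powerset.mpr hsub,
          (e_char hr hij la lb _ hsub).mpr ⟨x, y, hxy, rfl, hxg, hyg, hui, huj⟩⟩)))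
      · exact Or.inl (Or.inl (Or.inr (Finset.mem_filter.mpr ⟨Finset.mem_powerset.mpr hsub,
          (f_char hr hij la lb _ hsub).mpr ⟨x, y, hxy, rfl, hxg, hyg, hui, huj⟩⟩)))
      · exact Or.inr (Finset.mem_filter.mpr ⟨Finset.mem_powerset.mpr hsub,
          (f_char hr hij lb la _ hsub).mpr
            ⟨y, x, hxy.symm, Finset.pair_comm x y, hyg, hxg, hui, huj⟩⟩)
      · exact Or.inl (Or.inr (Finset.mem_filter.mpr ⟨Finset.mem_powerset.mpr hsub,
          (e_char hr hij lb la _ hsub).mpr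
            ⟨y, x, hxy.symm, Finset.pair_comm x y, hyg, hxg, hui, huj⟩⟩))
  have hinj : Set.InjOn (fun q : ℕ × ℕ => ({q.1, q.2} : Finset ℕ)) ↑(GA ×ˢ GB) := by
    rintro ⟨x, y⟩ hq ⟨x', y'⟩ hq' heq
    simp only [Finset.coe_product, Set.mem_prod, Finset.mem_coe] at hq hq'
    obtain ⟨hx, hy⟩ := hq
    obtain ⟨hx', hy'⟩ := hq'
    simp only at heq
    have hxx : x = x' := by
      have : x ∈ ({x', y'} : Finset ℕ) := by rw [← heq]; simp
      rcases Finset.mem_insert.mp this with h | h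
      · exact h
      · rw [Finset.mem_singleton] at h; subst h
        exact absurd hy' (fun hc => hGdisj x hx hc)
    have hyy : y = y' := by
      have : y ∈ ({x', y'} : Finset ℕ) := by rw [← heq]; simp
      rcases Finset.mem_insert.mp this with h | h
      · subst h
        exact absurd hx' (fun hc => hGdisj y hc hy)
      · rw [Finset.mem_singleton] at h; exact h
    simp [hxx, hyy]
  have hd123_4 : Disjoint (A1 ∪ A2 ∪ A3) A4 :=
    Finset.disjoint_union_left.mpr ⟨Finset.disjoint_union_left.mpr ⟨d14, d24⟩, d34⟩
  have hd12_3 : Disjoint (A1 ∪ A2) A3 := Finset.disjoint_union_left.mpr ⟨d13, d23⟩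
  calc A1.card + A2.card + A3.card + A4.card
      = (A1 ∪ A2 ∪ A3 ∪ A4).card := by
        rw [Finset.card_union_of_disjoint hd123_4, Finset.card_union_of_disjoint hd12_3,
          Finset.card_union_of_disjoint d12]
    _ = ((GA ×ˢ GB).image (fun q => {q.1, q.2})).card := by rw [hunion]
    _ = (GA ×ˢ GB).card := Finset.card_image_of_injOn hinj
    _ = GA.card * GB.card := Finset.card_product GA GB


theorem two_mul_choose_two (n : ℕ) : 2 * n.choose 2 = n * (n - 1) := by
  cases n with
  | zero => rfl
  | succ m =>
    have h : 2 ∣ (m + 1) * m := by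
      rcases Nat.even_or_odd m with he | ho
      · exact Dvd.dvd.mul_left he.two_dvd (m + 1)
      · exact Dvd.dvd.mul_right (Even.two_dvd ho.add_one) m
    rw [Nat.choose_two_right, Nat.succ_sub_one, Nat.mul_div_cancel' h]

theorem cast_mul_pred (n : ℕ) : ((n * (n - 1) : ℕ) : ℤ) = (n : ℤ) * ((n : ℤ) - 1) := by
  cases n with
  | zero => simp
  | succ m => push_cast [Nat.succ_sub_one]; ring


end NanoAux

open NanoAux



/-- fix an involution τ and `a` with `a ≠ τ(a)`, `b = τ(a)`.  For an
`r`-component nanophrase `p` and components `i < j`, with `k = ⟨g_{i,j,a}, p⟩` and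
`l = ⟨g_{i,j,b}, p⟩`, the stated counting identities hold, and consequently the
degree-2 angle bracket formula equals `(k − l)²`, the square of the `a`-component
of the linking number. -/
theorem degree_two_formula_squares_linking {α : Type}
    (τ : α → α) (hτ : Function.Involutive τ) (a b : α) (ha : a ≠ τ a) (hb : b = τ a)
    (r : ℕ) (i j : Fin r) (hij : i < j)
    (p : NPhrase α) (hp : IsNano p) (hpr : comps p = r) :
    (letI k := bracketN (gPat r i j a) p
     letI l := bracketN (gPat r i j b) p
     2 * (bracketN (ePat r i j a a) p + bracketN (fPat r i j a a) p) = k * (k - 1) ∧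
     2 * (bracketN (ePat r i j b b) p + bracketN (fPat r i j b b) p) = l * (l - 1) ∧
     bracketN (ePat r i j a b) p + bracketN (fPat r i j a b) p
       + bracketN (ePat r i j b a) p + bracketN (fPat r i j b a) p = k * l ∧
     (2 * bracketN (ePat r i j a a) p + 2 * bracketN (fPat r i j a a) p
       - 2 * bracketN (ePat r i j a b) p - 2 * bracketN (fPat r i j a b) p
       - 2 * bracketN (ePat r i j b a) p - 2 * bracketN (fPat r i j b a) p
       + 2 * bracketN (ePat r i j b b) p + 2 * bracketN (fPat r i j b b) p
       + (k : ℤ) + (l : ℤ)) = ((k : ℤ) - l) ^ 2) := by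
  obtain ⟨C, hC, hlen⟩ : ∃ C : List (List (ℕ × α)), ofComponents C = p ∧ C.length = r :=
    ⟨NanoAux.decode p, NanoAux.ofComponents_decode p, by rw [NanoAux.length_decode, hpr]⟩
  subst hlen
  have hr : C.length ≠ 0 := Nat.pos_iff_ne_zero.mp i.pos
  have hij' : i ≠ j := Fin.ne_of_lt hij
  have hab : a ≠ b := fun h => ha (h.trans hb)
  have hp2 : p = ofComponents (List.ofFn C.get) := by rw [List.ofFn_get]; exact hC.symm
  rw [hp2]
  set P := ofComponents (List.ofFn C.get) with hP
  have F1 : 2 * (bracketN (ePat C.length i j a a) P + bracketN (fPat C.length i j a a) P) =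
      bracketN (gPat C.length i j a) P * (bracketN (gPat C.length i j a) P - 1) := by
    rw [count_same hr hij' a, two_mul_choose_two, count_g hr hij' a]
  have F2 : 2 * (bracketN (ePat C.length i j b b) P + bracketN (fPat C.length i j b b) P) =
      bracketN (gPat C.length i j b) P * (bracketN (gPat C.length i j b) P - 1) := by
    rw [count_same hr hij' b, two_mul_choose_two, count_g hr hij' b]
  have F3 : bracketN (ePat C.length i j a b) P + bracketN (fPat C.length i j a b) P
      + bracketN (ePat C.length i j b a) P + bracketN (fPat C.length i j b a) P =
      bracketN (gPat C.length i j a) P * bracketN (gPat C.length i j b) P := by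
    rw [count_g hr hij' a, count_g hr hij' b]
    exact count_mixed hr hij' hab
  refine ⟨F1, F2, F3, ?_⟩
  have c1 : (2 : ℤ) * ((bracketN (ePat C.length i j a a) P : ℤ)
      + (bracketN (fPat C.length i j a a) P : ℤ)) =
      (bracketN (gPat C.length i j a) P : ℤ) * ((bracketN (gPat C.length i j a) P : ℤ) - 1) := by
    have h := congrArg (Nat.cast : ℕ → ℤ) F1
    rw [cast_mul_pred] at h
    push_cast at h
    linarith
  have c2 : (2 : ℤ) * ((bracketN (ePat C.length i j b b) P : ℤ)
      + (bracketN (fPat C.length i j b b) P : ℤ)) =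
      (bracketN (gPat C.length i j b) P : ℤ) * ((bracketN (gPat C.length i j b) P : ℤ) - 1) := by
    have h := congrArg (Nat.cast : ℕ → ℤ) F2
    rw [cast_mul_pred] at h
    push_cast at h
    linarith
  have c3 : (bracketN (ePat C.length i j a b) P : ℤ) + (bracketN (fPat C.length i j a b) P : ℤ)
      + (bracketN (ePat C.length i j b a) P : ℤ) + (bracketN (fPat C.length i j b a) P : ℤ) =
      (bracketN (gPat C.length i j a) P : ℤ) * (bracketN (gPat C.length i j b) P : ℤ) := by
    exact_mod_cast congrArg (Nat.cast : ℕ → ℤ) F3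
  linear_combination c1 + c2 - 2 * c3
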